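/- Let d ≥ 2 be an integer. Then the constant c_d = ψ(x*), where ψ(x) = −ln(x)/(1−x)^d and x* is the unique root in (0,1) of (d+1)(1−x) + (1+dx)ln(x) = 0, satisfies γ_d < c_d < d+1, where γ_d = min_{x∈(0,1)} ψ(x). -/

import Mathlib

open Real Set

lemma aux_anti : StrictAntiOn (fun t : ℝ => t⁻¹ - t + 2 * Real.log t) (Set.Ioc 0 1) := by
  apply strictAntiOn_of_deriv_neg (convex_Ioc 0 1)
  · intro t ht
    exact (((continuousAt_inv₀ (ne_of_gt ht.1)).sub continuousAt_id).add
      ((Real.continuousAt_log (ne_of_gt ht.1)).const_mul 2)).continuousWithinAt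
  · intro t ht
    rw [interior_Ioc] at ht
    have ht0 := ht.1
    have hd : HasDerivAt (fun t : ℝ => t⁻¹ - t + 2 * Real.log t)
        (-(t^2)⁻¹ - 1 + 2 * t⁻¹) t := by
      have h1 := (hasDerivAt_inv (ne_of_gt ht0)).sub (hasDerivAt_id t)
      have h2 := (Real.hasDerivAt_log (ne_of_gt ht0)).const_mul (2:ℝ)
      exact (h1.add h2).congr_deriv (by ring)
    rw [hd.deriv]
    have hu : 1 < t⁻¹ := (one_lt_inv₀ ht0).mpr ht.2
    have he : (t^2)⁻¹ = t⁻¹ * t⁻¹ := by rw [sq, mul_inv]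
    rw [he]
    nlinarith [mul_pos (sub_pos.mpr hu) (sub_pos.mpr hu)]

lemma log_lt_aux {x : ℝ} (hx0 : 0 < x) (hx1 : x < 1) :
    Real.sqrt x * (-Real.log x) < 1 - x := by
  set s := Real.sqrt x with hs
  have hs0 : 0 < s := Real.sqrt_pos.mpr hx0
  have hs2 : s ^ 2 = x := Real.sq_sqrt hx0.le
  have hs1 : s < 1 := by nlinarith
  have hlog : Real.log x = 2 * Real.log s := by
    rw [hs, Real.log_sqrt hx0.le]; ring
  have h := aux_anti (Set.mem_Ioc.mpr ⟨hs0, hs1.le⟩)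
    (Set.mem_Ioc.mpr ⟨one_pos, le_refl 1⟩) hs1
  simp only [inv_one, Real.log_one, mul_zero, sub_self, add_zero] at h
  have hss : s * s⁻¹ = 1 := mul_inv_cancel₀ hs0.ne'
  rw [hlog, ← hs2]
  nlinarith [mul_pos hs0 h]

theorem gamma_lt_c_lt_d_add_one (d : ℕ) (hd : 2 ≤ d) (γ xstar : ℝ)
    (hγ : IsLeast ((fun x : ℝ => -Real.log x / (1 - x) ^ d) '' Set.Ioo (0:ℝ) 1) γ)
    (hx : xstar ∈ Set.Ioo (0:ℝ) 1)
    (hroot : ((d:ℝ) + 1) * (1 - xstar) + (1 + (d:ℝ) * xstar) * Real.log xstar = 0) :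
    γ < -Real.log xstar / (1 - xstar) ^ d ∧
      -Real.log xstar / (1 - xstar) ^ d < (d:ℝ) + 1 := by
  obtain ⟨hx0, hx1⟩ := hx
  have hdR : (2:ℝ) ≤ (d:ℝ) := by exact_mod_cast hd
  have hd0 : (0:ℝ) < (d:ℝ) := by linarith
  have hlogneg : Real.log xstar < 0 := Real.log_neg hx0 hx1
  have h1x : (0:ℝ) < 1 - xstar := by linarith
  have hr' : (1 + (d:ℝ)*xstar) * (-Real.log xstar) = ((d:ℝ)+1) * (1 - xstar) := by
    linear_combination -hroot
  -- Step 1 : d^2 * xstar < 1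
  have hstep1 : (d:ℝ)^2 * xstar < 1 := by
    by_contra hcon
    push_neg at hcon
    set s := Real.sqrt xstar with hsdef
    have hs0 : 0 < s := Real.sqrt_pos.mpr hx0
    have hs2 : s ^ 2 = xstar := Real.sq_sqrt hx0.le
    have hs1 : s < 1 := by nlinarith
    have hds : 1 ≤ (d:ℝ) * s := by
      by_contra hds'
      push_neg at hds'
      nlinarith [mul_pos hd0 hs0]
    have hkey := log_lt_aux hx0 hx1
    rw [← hsdef] at hkey
    have hcoef : 1 + (d:ℝ) * xstar ≤ ((d:ℝ)+1) * s := by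
      nlinarith [mul_nonneg (by linarith : (0:ℝ) ≤ 1 - s) (by linarith : (0:ℝ) ≤ (d:ℝ)*s - 1)]
    have hpos : 0 < -Real.log xstar := by linarith
    have hlt : (1 + (d:ℝ)*xstar) * (-Real.log xstar) < ((d:ℝ)+1) * (1 - xstar) := by
      calc (1 + (d:ℝ)*xstar) * (-Real.log xstar)
          ≤ ((d:ℝ)+1)*s * (-Real.log xstar) := mul_le_mul_of_nonneg_right hcoef hpos.le
        _ = ((d:ℝ)+1) * (s * (-Real.log xstar)) := by ring
        _ < ((d:ℝ)+1) * (1 - xstar) := by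
            apply mul_lt_mul_of_pos_left hkey; linarith
    linarith [hr', hlt]
  obtain ⟨e, rfl⟩ : ∃ e, d = e + 1 := ⟨d - 1, (Nat.succ_pred_eq_of_pos (by omega)).symm⟩
  have hcast : ((e+1 : ℕ) : ℝ) = (e:ℝ) + 1 := by push_cast; ring
  have he1 : (1:ℝ) ≤ (e:ℝ) := by
    have : (1:ℕ) ≤ e := by omega
    exact_mod_cast this
  -- Step 2 : (1+d x)(1-x)^e > 1
  have hB := one_add_mul_le_pow (by linarith : (-2:ℝ) ≤ -xstar) e
  have hB' : 1 - (e:ℝ) * xstar ≤ (1 - xstar) ^ e := by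
    rw [show (1:ℝ) + -xstar = 1 - xstar from by ring] at hB
    linarith [hB]
  have hcdpos : (0:ℝ) < 1 + ((e+1:ℕ):ℝ) * xstar := by rw [hcast]; nlinarith
  have hg : 1 < (1 + ((e+1:ℕ):ℝ) * xstar) * (1 - xstar) ^ e := by
    have h1 : (1 + ((e+1:ℕ):ℝ) * xstar) * (1 - (e:ℝ)*xstar)
        ≤ (1 + ((e+1:ℕ):ℝ) * xstar) * (1 - xstar)^e :=
      mul_le_mul_of_nonneg_left hB' hcdpos.le
    rw [hcast] at h1 ⊢
    rw [hcast] at hstep1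
    have hq : (e:ℝ) * ((e:ℝ)+1) * xstar < 1 := by nlinarith [hstep1, hx0]
    nlinarith [h1, mul_pos hx0 (by linarith : (0:ℝ) < 1 - (e:ℝ)*((e:ℝ)+1)*xstar)]
  have hpowpos : (0:ℝ) < (1 - xstar) ^ e := by positivity
  have hpows : (1 - xstar) ^ (e+1) = (1 - xstar)^e * (1 - xstar) := pow_succ _ _
  constructor
  · -- lower bound
    have hmemx : -Real.log xstar / (1 - xstar) ^ (e+1) ∈
        ((fun x : ℝ => -Real.log x / (1 - x) ^ (e+1)) '' Set.Ioo (0:ℝ) 1) :=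
      ⟨xstar, ⟨hx0, hx1⟩, rfl⟩
    have hγle : γ ≤ -Real.log xstar / (1 - xstar) ^ (e+1) := hγ.2 hmemx
    rcases lt_or_eq_of_le hγle with h | h
    · exact h
    · exfalso
      -- xstar is a global minimizer; derivative vanishes
      have hmin : IsMinOn (fun x : ℝ => -Real.log x / (1 - x) ^ (e+1)) (Set.Ioo 0 1) xstar := by
        intro z hz
        have : γ ≤ -Real.log z / (1 - z) ^ (e+1) := hγ.2 ⟨z, hz, rfl⟩
        simpa [← h] using this
      have hloc : IsLocalMin (fun x : ℝ => -Real.log x / (1 - x) ^ (e+1)) xstar :=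
        hmin.isLocalMin (Ioo_mem_nhds hx0 hx1)
      have hu : HasDerivAt (fun x : ℝ => -Real.log x) (-xstar⁻¹) xstar :=
        (Real.hasDerivAt_log hx0.ne').neg
      have hv0 : HasDerivAt (fun x : ℝ => 1 - x) (-1) xstar := by
        simpa using (hasDerivAt_id xstar).const_sub 1
      have hv : HasDerivAt (fun x : ℝ => (1 - x)^(e+1))
          (((e+1:ℕ):ℝ) * (1 - xstar)^e * (-1)) xstar := by
        exact (hv0.pow (e+1)).congr_deriv (by simp)
      have hvne : (1 - xstar)^(e+1) ≠ 0 := by positivity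
      have hdiv := hu.div hv hvne
      have hzero := hloc.hasDerivAt_eq_zero hdiv
      have hnum : -xstar⁻¹ * (1 - xstar)^(e+1) -
          (-Real.log xstar) * (((e+1:ℕ):ℝ) * (1 - xstar)^e * (-1)) = 0 := by
        rcases div_eq_zero_iff.mp hzero with h' | h'
        · exact h'
        · exact absurd h' (by positivity)
      have hA : ((e:ℝ)+1) * xstar * Real.log xstar = xstar - 1 := by
        rw [hpows, hcast] at hnum
        have hxne : xstar ≠ 0 := hx0.ne'
        have h5 : (1 - xstar)^e * ((1 - xstar) + ((e:ℝ)+1) * xstar * Real.log xstar) = 0 := by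
          have := mul_eq_zero_of_left hnum xstar
          field_simp at this
          linear_combination -this
        rcases mul_eq_zero.mp h5 with h' | h'
        · exact absurd h' hpowpos.ne'
        · linarith
      rw [hcast] at hroot hstep1
      have hfact : (1 - xstar) * (((e:ℝ)+1)^2 * xstar - 1) = 0 := by
        linear_combination (((e:ℝ)+1)*xstar) * hroot - (1 + ((e:ℝ)+1)*xstar) * hA
      nlinarith [hfact, hstep1, h1x, hx0]
  · -- upper bound
    rw [div_lt_iff₀ (by positivity : (0:ℝ) < (1 - xstar)^(e+1))]
    have hcd := hcdpos
    apply lt_of_mul_lt_mul_left _ hcd.le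
    rw [show (1 + ((e+1:ℕ):ℝ) * xstar) * (-Real.log xstar)
        = ((((e+1:ℕ)):ℝ)+1) * (1 - xstar) from hr']
    rw [hpows]
    nlinarith [mul_lt_mul_of_pos_left hg (mul_pos
      (show (0:ℝ) < ((e+1:ℕ):ℝ)+1 by rw [hcast]; linarith) h1x)]
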